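/- For nonnegative integers t, N and integers u, v with t ≤ u, v ≤ N − t, the partial trace over the first t qubits satisfies Tr_t(|H^N_u⟩⟨H^N_v|) = Σ_{s=0}^{t} C(t,s) |H^{N−t}_{u−s}⟩⟨H^{N−t}_{v−s}|. -/

import Mathlib

/-- Hamming weight of a bit string of length `N`. -/
def hamWeight {N : ℕ} (x : Fin N → Bool) : ℕ :=
  (Finset.univ.filter (fun i => x i = true)).card

/-- Unnormalized Dicke state `|H^N_w⟩`. -/
noncomputable def dickeH (N w : ℕ) : (Fin N → Bool) → ℂ :=
  fun x => if hamWeight x = w then 1 else 0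

/-- Outer product `|f⟩⟨g|` as a matrix indexed by bit strings. -/
noncomputable def outer {N : ℕ} (f g : (Fin N → Bool) → ℂ) :
    Matrix (Fin N → Bool) (Fin N → Bool) ℂ :=
  fun x y => f x * (starRingEnd ℂ) (g y)

/-- Partial trace over the first `t` qubits, identifying a length-`t+n`
bit string with the pair of its first `t` bits and last `n` bits. -/
noncomputable def ptrace {t n : ℕ}
    (M : Matrix (Fin (t + n) → Bool) (Fin (t + n) → Bool) ℂ) :
    Matrix (Fin n → Bool) (Fin n → Bool) ℂ :=
  fun y y' => ∑ x : Fin t → Bool, M (Fin.append x y) (Fin.append x y')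

lemma hamWeight_append {t n : ℕ} (x : Fin t → Bool) (y : Fin n → Bool) :
    hamWeight (Fin.append x y) = hamWeight x + hamWeight y := by
  simp only [hamWeight, Finset.card_filter]
  rw [Fin.sum_univ_add]
  simp [Fin.append_left, Fin.append_right]

lemma hamWeight_le {t : ℕ} (x : Fin t → Bool) : hamWeight x ≤ t := by
  calc hamWeight x ≤ (Finset.univ : Finset (Fin t)).card :=
        Finset.card_filter_le _ _
    _ = t := by simp

lemma card_hamWeight (t s : ℕ) :
    ((Finset.univ : Finset (Fin t → Bool)).filter (fun x => hamWeight x = s)).card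
      = t.choose s := by
  have h : t.choose s = (Finset.powersetCard s (Finset.univ : Finset (Fin t))).card := by
    rw [Finset.card_powersetCard]; simp
  rw [h]
  apply Finset.card_bij (fun x _ => Finset.univ.filter (fun i => x i = true))
  · intro x hx
    rw [Finset.mem_powersetCard]
    exact ⟨Finset.filter_subset _ _, (Finset.mem_filter.mp hx).2⟩
  · intro x hx x' hx' h
    funext i
    have := Finset.ext_iff.mp h i
    simp only [Finset.mem_filter, Finset.mem_univ, true_and] at this
    cases hxi : x i <;> cases hx'i : x' i <;> simp_all
  · intro S hS
    rw [Finset.mem_powersetCard] at hS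
    refine ⟨fun i => i ∈ S, ?_, ?_⟩
    · simp only [Finset.mem_filter, Finset.mem_univ, true_and, hamWeight]
      rw [← hS.2]
      refine Finset.mem_filter.mpr ⟨Finset.mem_univ _, ?_⟩
      congr 1
      ext i; simp
    · ext i; simp

lemma sum_hamWeight_fiber (t : ℕ) (g : ℕ → ℂ) :
    ∑ x : Fin t → Bool, g (hamWeight x)
      = ∑ s ∈ Finset.range (t + 1), (t.choose s : ℂ) * g s := by
  rw [← Finset.sum_fiberwise_of_maps_to
      (g := hamWeight) (t := Finset.range (t + 1))
      (fun x _ => Finset.mem_range.mpr (Nat.lt_succ_of_le (hamWeight_le x)))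
      (fun x => g (hamWeight x))]
  refine Finset.sum_congr rfl fun s _ => ?_
  rw [Finset.sum_congr rfl (fun x hx => by
        rw [(Finset.mem_filter.mp hx).2]),
      Finset.sum_const, card_hamWeight]
  simp [mul_comm]

/-- `Tr_t(|H^N_u⟩⟨H^N_v|) = Σ_{s=0}^{t} C(t,s) |H^{N−t}_{u−s}⟩⟨H^{N−t}_{v−s}|`,
with `N = t + n` so that `N − t = n`. -/
theorem ptrace_dickeH_outer (t n u v : ℕ)
    (htu : t ≤ u) (hun : u ≤ n) (htv : t ≤ v) (hvn : v ≤ n) :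
    ptrace (outer (dickeH (t + n) u) (dickeH (t + n) v)) =
      ∑ s ∈ Finset.range (t + 1),
        (t.choose s : ℂ) • outer (dickeH n (u - s)) (dickeH n (v - s)) := by
  funext y y'
  have hL : ptrace (outer (dickeH (t + n) u) (dickeH (t + n) v)) y y'
      = ∑ x : Fin t → Bool,
          (fun s => (if s + hamWeight y = u then (1:ℂ) else 0) *
            (if s + hamWeight y' = v then (1:ℂ) else 0)) (hamWeight x) := by
    simp [ptrace, outer, dickeH, hamWeight_append, apply_ite (starRingEnd ℂ)]
  rw [hL, sum_hamWeight_fiber t (fun s => (if s + hamWeight y = u then (1:ℂ) else 0) *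
    (if s + hamWeight y' = v then (1:ℂ) else 0))]
  have hR : (∑ s ∈ Finset.range (t + 1),
        (t.choose s : ℂ) • outer (dickeH n (u - s)) (dickeH n (v - s))) y y'
      = ∑ s ∈ Finset.range (t + 1), (t.choose s : ℂ) *
          ((if hamWeight y = u - s then (1:ℂ) else 0) *
            (if hamWeight y' = v - s then (1:ℂ) else 0)) := by
    rw [Matrix.sum_apply]  -- may need adjusting
    simp [outer, dickeH, apply_ite (starRingEnd ℂ), smul_eq_mul]
  rw [hR]
  refine Finset.sum_congr rfl fun s hs => ?_
  have hst : s ≤ t := Nat.lt_succ_iff.mp (Finset.mem_range.mp hs)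
  congr 1
  rw [if_congr (by omega : (s + hamWeight y = u) ↔ (hamWeight y = u - s)) rfl rfl,
      if_congr (by omega : (s + hamWeight y' = v) ↔ (hamWeight y' = v - s)) rfl rfl]
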